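/- Every cycle of the explorer-neighbourhood Expl(v,w) is generated, over 𝔽₂, by the cycles of the embedded balls B_{r/2}(v)' and B_{r/2}(w)'. -/

import Mathlib

open SimpleGraph

universe u

namespace LocalSep

variable {V : Type u}

/-- The ball of radius `r/2` around `v`: vertices of distance at most `⌊r/2⌋` from `v`;
if `r` is even, edges joining two vertices of distance exactly `r/2` are removed. -/
def ballVerts (G : SimpleGraph V) (v : V) (r : ℕ) : Set V :=
  {u | G.Reachable v u ∧ G.dist v u ≤ r / 2}

def ball (G : SimpleGraph V) (v : V) (r : ℕ) : G.Subgraph where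
  verts := ballVerts G v r
  Adj u u' := G.Adj u u' ∧ u ∈ ballVerts G v r ∧ u' ∈ ballVerts G v r ∧
    (Even r → ¬(G.dist v u = r / 2 ∧ G.dist v u' = r / 2))
  adj_sub h := h.1
  edge_vert h := h.2.1
  symm := ⟨fun u u' h => ⟨h.1.symm, h.2.2.1, h.2.1, fun he hc => h.2.2.2 he ⟨hc.2, hc.1⟩⟩⟩

/-- `v` is an `r`-local cutvertex if the punctured ball `B_{r/2}(v) - v` is disconnected. -/
def IsLocalCutvertex (G : SimpleGraph V) (r : ℕ) (v : V) : Prop :=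
  ¬ ((ball G v r).deleteVerts {v}).coe.Connected

def HasShortCycle (G : SimpleGraph V) (r : ℕ) : Prop :=
  ∃ (u : V) (c : G.Walk u u), c.IsCycle ∧ c.length ≤ r

/-- A connected graph is `r`-locally 2-connected if it has no `r`-local cutvertex
and contains a cycle of length at most `r`. -/
def LocallyTwoConnected (G : SimpleGraph V) (r : ℕ) : Prop :=
  G.Connected ∧ (∀ v : V, ¬ IsLocalCutvertex G r v) ∧ HasShortCycle G r

/-- The core of `(a₁, a₂)`: all vertices on shortest `a₁`–`a₂` paths. -/
def core (G : SimpleGraph V) (a₁ a₂ : V) : Set V :=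
  {x | ∃ p : G.Walk a₁ a₂, p.IsPath ∧ p.length = G.dist a₁ a₂ ∧ x ∈ p.support}

/-- A walk is contained in a subgraph. -/
def WalkIn {G : SimpleGraph V} (B : G.Subgraph) {x y : V} (p : G.Walk x y) : Prop :=
  p.toSubgraph ≤ B

/-- The label of a vertex `u` in a ball `B`: the set of (supports of) shortest paths
from the core `C` to `u` contained in `B`. -/
def labelIn (G : SimpleGraph V) (B : G.Subgraph) (C : Set V) (u : V) : Set (List V) :=
  {l | ∃ c ∈ C, ∃ p : G.Walk c u, p.IsPath ∧ WalkIn B p ∧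
    (∀ c' ∈ C, ∀ q : G.Walk c' u, q.IsPath → WalkIn B q → p.length ≤ q.length) ∧
    l = p.support}

/-- A potential vertex of the explorer-neighbourhood: a vertex together with a label. -/
abbrev EVert (V : Type u) : Type u := V × Set (List V)

/-- `p` is the copy of the vertex `p.1` in the labelled ball around `a ∈ {a₁, a₂}`. -/
def inCopy (G : SimpleGraph V) (a₁ a₂ : V) (r : ℕ) (a : V) (p : EVert V) : Prop :=
  p.1 ∈ ballVerts G a r ∧ p.2 = labelIn G (ball G a r) (core G a₁ a₂) p.1

/-- Vertices of the explorer-neighbourhood `Expl(a₁,a₂)`. -/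
def explVerts (G : SimpleGraph V) (a₁ a₂ : V) (r : ℕ) : Set (EVert V) :=
  {p | inCopy G a₁ a₂ r a₁ p ∨ inCopy G a₁ a₂ r a₂ p}

/-- The explorer-neighbourhood `Expl(a₁,a₂)`: the union of the two labelled balls,
where two copies of a vertex are identified iff their labels agree. -/
def expl (G : SimpleGraph V) (a₁ a₂ : V) (r : ℕ) : SimpleGraph (EVert V) where
  Adj p q :=
    (inCopy G a₁ a₂ r a₁ p ∧ inCopy G a₁ a₂ r a₁ q ∧ (ball G a₁ r).Adj p.1 q.1) ∨
    (inCopy G a₁ a₂ r a₂ p ∧ inCopy G a₁ a₂ r a₂ q ∧ (ball G a₂ r).Adj p.1 q.1)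
  symm := ⟨by
    intro p q h
    rcases h with ⟨h1, h2, h3⟩ | ⟨h1, h2, h3⟩
    · exact Or.inl ⟨h2, h1, h3.symm⟩
    · exact Or.inr ⟨h2, h1, h3.symm⟩⟩
  loopless := ⟨by
    intro p h
    rcases h with ⟨-, -, h⟩ | ⟨-, -, h⟩ <;> exact G.ne_of_adj h.adj_sub rfl⟩

/-- Vertices of the punctured explorer-neighbourhood `Expl(a₁,a₂) - a₁ - a₂`. -/
def pexplVerts (G : SimpleGraph V) (a₁ a₂ : V) (r : ℕ) : Set (EVert V) :=
  {p | p ∈ explVerts G a₁ a₂ r ∧ p.1 ≠ a₁ ∧ p.1 ≠ a₂}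

/-- The punctured explorer-neighbourhood `Expl(a₁,a₂) - a₁ - a₂`. -/
def pexpl (G : SimpleGraph V) (a₁ a₂ : V) (r : ℕ) :
    SimpleGraph (pexplVerts G a₁ a₂ r) :=
  SimpleGraph.induce (pexplVerts G a₁ a₂ r) (expl G a₁ a₂ r)

/-- `{v,w}` is an `r`-local 2-separator: `v,w` have distance at most `r/2` and the
punctured explorer-neighbourhood is disconnected. -/
def IsLocalTwoSep (G : SimpleGraph V) (r : ℕ) (v w : V) : Prop :=
  v ≠ w ∧ G.Reachable v w ∧ 2 * G.dist v w ≤ r ∧ ¬ (pexpl G v w r).Connected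

/-- The pair `(p,q)` of vertices of `Expl(b₁,b₂)` crosses the local 2-separator `{b₁,b₂}`:
they lie in different components of the punctured explorer-neighbourhood and there is a cycle
of length at most `r` through them containing a copy of `b₁` or `b₂`. -/
def CrossesPair (G : SimpleGraph V) (r : ℕ) (b₁ b₂ : V) (p q : EVert V) : Prop :=
  ∃ (hp : p ∈ pexplVerts G b₁ b₂ r) (hq : q ∈ pexplVerts G b₁ b₂ r),
    ¬ (pexpl G b₁ b₂ r).Reachable ⟨p, hp⟩ ⟨q, hq⟩ ∧
    ∃ (u : EVert V) (c : (expl G b₁ b₂ r).Walk u u), c.IsCycle ∧ c.length ≤ r ∧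
      p ∈ c.support ∧ q ∈ c.support ∧ ∃ z ∈ c.support, z.1 = b₁ ∨ z.1 = b₂

/-- `{a₁,a₂}` crosses `{b₁,b₂}`: some copies of `a₁`, `a₂` cross `{b₁,b₂}`. -/
def Crosses (G : SimpleGraph V) (r : ℕ) (a₁ a₂ b₁ b₂ : V) : Prop :=
  ∃ p q : EVert V, p.1 = a₁ ∧ q.1 = a₂ ∧ CrossesPair G r b₁ b₂ p q

/-- Some copy of `x` lies in the same component of `Expl(v,w) - v - w` as some copy of `y`. -/
def CopyReach (G : SimpleGraph V) (r : ℕ) (v w x y : V) : Prop :=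
  ∃ (p q : EVert V) (hp : p ∈ pexplVerts G v w r) (hq : q ∈ pexplVerts G v w r),
    p.1 = x ∧ q.1 = y ∧ (pexpl G v w r).Reachable ⟨p, hp⟩ ⟨q, hq⟩

/-- A cycle through `a₁` alternating between `{a₁,a₂}` and `{b₁,b₂}`: the four vertices are
distinct and `b₁`, `b₂` lie on different arcs of the cycle between `a₁` and `a₂`. -/
def AltCycle (G : SimpleGraph V) (a₁ a₂ b₁ b₂ : V) (c : G.Walk a₁ a₁) : Prop :=
  c.IsCycle ∧ b₁ ≠ b₂ ∧ b₁ ∉ ({a₁, a₂} : Set V) ∧ b₂ ∉ ({a₁, a₂} : Set V) ∧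
  ∃ (p : G.Walk a₁ a₂) (q : G.Walk a₂ a₁), c = p.append q ∧
    ((b₁ ∈ p.support ∧ b₂ ∈ q.support) ∨ (b₂ ∈ p.support ∧ b₁ ∈ q.support))

/-- `S` is generated over `𝔽₂` by members of `C` (sum = symmetric difference). -/
def GeneratedBy {α : Type*} (C : Set (Set (Sym2 α))) (S : Set (Sym2 α)) : Prop :=
  ∃ l : List (Set (Sym2 α)), (∀ A ∈ l, A ∈ C) ∧ l.foldr symmDiff ∅ = S

/-- The edge set of a walk. -/
def walkEdgeSet {α : Type*} {H : SimpleGraph α} {x y : α} (c : H.Walk x y) : Set (Sym2 α) :=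
  {e | e ∈ c.edges}


/-- A cycle of the explorer-neighbourhood contained in the embedded copy of the ball
`B_{r/2}(a)`: all its vertices are copies from that ball and all its edges are ball edges. -/
def BallCopyCycle {V : Type u} (G : SimpleGraph V) (a₁ a₂ : V) (r : ℕ) (a : V)
    {u : EVert V} (c : (expl G a₁ a₂ r).Walk u u) : Prop :=
  (∀ p ∈ c.support, inCopy G a₁ a₂ r a p) ∧
  ∀ d ∈ c.darts, (ball G a r).Adj d.toProd.1.1 d.toProd.2.1

set_option linter.dupNamespace false
section aux
variable {α : Type*}

def chainL (l : List (Sym2 α)) : Set (Sym2 α) := l.foldr (fun e s => symmDiff {e} s) ∅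

@[simp] lemma chainL_nil : chainL ([] : List (Sym2 α)) = ∅ := rfl

@[simp] lemma chainL_cons (e : Sym2 α) (l : List (Sym2 α)) :
    chainL (e :: l) = symmDiff {e} (chainL l) := rfl

lemma chainL_foldr (l : List (Sym2 α)) (A : Set (Sym2 α)) :
    l.foldr (fun e s => symmDiff {e} s) A = symmDiff (chainL l) A := by
  induction l with
  | nil => simp [chainL, symmDiff_bot, Set.bot_eq_empty.symm ▸ bot_symmDiff]
  | cons e l ih =>
      simp only [List.foldr_cons, ih, chainL_cons, symmDiff_assoc]

lemma chainL_append (l₁ l₂ : List (Sym2 α)) :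
    chainL (l₁ ++ l₂) = symmDiff (chainL l₁) (chainL l₂) := by
  rw [chainL, List.foldr_append, chainL_foldr]; rfl

lemma chainL_perm {l₁ l₂ : List (Sym2 α)} (h : l₁.Perm l₂) : chainL l₁ = chainL l₂ := by
  induction h with
  | nil => rfl
  | cons x _ ih => simp [ih]
  | swap x y l => simp only [chainL_cons, ← symmDiff_assoc, symmDiff_comm ({x} : Set (Sym2 α))]
  | trans _ _ ih₁ ih₂ => rw [ih₁, ih₂]

lemma chainL_nodup {l : List (Sym2 α)} (h : l.Nodup) : chainL l = {e | e ∈ l} := by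
  induction l with
  | nil => simp
  | cons e l ih =>
      rw [List.nodup_cons] at h
      rw [chainL_cons, ih h.2]
      ext x
      simp only [Set.mem_symmDiff, Set.mem_singleton_iff, Set.mem_setOf_eq, List.mem_cons]
      constructor
      · rintro (⟨rfl, -⟩ | ⟨hx, -⟩)
        · exact Or.inl rfl
        · exact Or.inr hx
      · rintro (rfl | hx)
        · exact Or.inl ⟨rfl, h.1⟩
        · exact Or.inr ⟨hx, fun he => h.1 (he ▸ hx)⟩

lemma gen_empty {C : Set (Set (Sym2 α))} : GeneratedBy C ∅ := ⟨[], by simp, rfl⟩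

lemma gen_mem {C : Set (Set (Sym2 α))} {S : Set (Sym2 α)} (h : S ∈ C) : GeneratedBy C S :=
  ⟨[S], by simpa using h, by simp [symmDiff_bot, Set.bot_eq_empty]⟩

lemma foldr_symmDiff_eq (l : List (Set (Sym2 α))) (A : Set (Sym2 α)) :
    l.foldr symmDiff A = symmDiff (l.foldr symmDiff ∅) A := by
  induction l with
  | nil => simp [Set.bot_eq_empty.symm ▸ bot_symmDiff]
  | cons e l ih => simp only [List.foldr_cons, ih, symmDiff_assoc]

lemma gen_symmDiff {C : Set (Set (Sym2 α))} {S T : Set (Sym2 α)}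
    (hS : GeneratedBy C S) (hT : GeneratedBy C T) : GeneratedBy C (symmDiff S T) := by
  obtain ⟨l₁, h₁, e₁⟩ := hS
  obtain ⟨l₂, h₂, e₂⟩ := hT
  refine ⟨l₁ ++ l₂, ?_, ?_⟩
  · intro A hA; rcases List.mem_append.mp hA with h | h; exacts [h₁ A h, h₂ A h]
  · rw [List.foldr_append, foldr_symmDiff_eq, e₂, e₁]

lemma gen_congr {C : Set (Set (Sym2 α))} {S T : Set (Sym2 α)} (h : S = T)
    (hS : GeneratedBy C S) : GeneratedBy C T := h ▸ hS





section generic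
variable {H : SimpleGraph α}

def chain {x y : α} (p : H.Walk x y) : Set (Sym2 α) := chainL p.edges

lemma chain_def {x y : α} (p : H.Walk x y) : chain p = chainL p.edges := rfl

local instance : Std.Associative (α := Set (Sym2 α)) symmDiff := ⟨symmDiff_assoc⟩
local instance : Std.Commutative (α := Set (Sym2 α)) symmDiff := ⟨symmDiff_comm⟩

lemma end_prop (P : α → Prop) : ∀ {x y : α} (c : H.Walk x y), ¬c.Nil →
    (∀ d ∈ c.darts, P d.snd) → P y := by
  intro x y c
  induction c with
  | nil => intro hn; exact absurd Walk.Nil.nil hn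
  | @cons x z y h d ih =>
      intro _ hd
      by_cases hdn : d.Nil
      · cases d with
        | nil => exact hd ⟨(x, z), h⟩ (by simp)
        | cons h' d' => simp [Walk.Nil] at hdn
      · exact ih hdn fun d' hd' => hd d' (by simp [hd'])

lemma start_prop (P : α → Prop) {x y : α} (c : H.Walk x y) (hn : ¬c.Nil)
    (hd : ∀ d ∈ c.darts, P d.fst) : P x := by
  cases c with
  | nil => exact absurd Walk.Nil.nil hn
  | @cons _ m _ h d => exact hd ⟨(x, m), h⟩ (by simp)

lemma supp_prop (P : α → Prop) : ∀ {x y : α} (c : H.Walk x y), ¬c.Nil →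
    (∀ d ∈ c.darts, P d.fst ∧ P d.snd) → ∀ p ∈ c.support, P p := by
  intro x y c
  induction c with
  | nil => intro hn; exact absurd Walk.Nil.nil hn
  | @cons x z y h d ih =>
      intro _ hd p hp
      rw [Walk.support_cons, List.mem_cons] at hp
      rcases hp with rfl | hp
      · exact (hd ⟨(p, z), h⟩ (by simp)).1
      · by_cases hdn : d.Nil
        · cases d with
          | nil =>
              simp only [Walk.support_nil, List.mem_singleton] at hp
              subst hp; exact (hd ⟨(x, p), h⟩ (by simp)).2
          | cons h' d' => simp [Walk.Nil] at hdn
        · exact ih hdn (fun d' hd' => hd d' (by simp [hd'])) p hp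

lemma path_end_edge {x u : α} (P : H.Walk x u) (hP : P.IsPath) (he : s(u, x) ∈ P.edges) :
    P.length = 1 := by
  cases P with
  | nil => simp at he
  | @cons _ z _ h' Q =>
      rw [Walk.cons_isPath_iff] at hP
      rw [Walk.edges_cons, List.mem_cons] at he
      rcases he with he | he
      · rcases Sym2.eq_iff.mp he with ⟨h1, h2⟩ | ⟨h1, h2⟩
        · exact absurd (h1 ▸ Q.end_mem_support) hP.2
        · subst h1
          cases Q with
          | nil => simp
          | cons h₃ Q₃ =>
              have hnd := hP.1.support_nodup
              rw [Walk.support_cons, List.nodup_cons] at hnd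
              exact absurd Q₃.end_mem_support hnd.1
      · exact absurd (Q.snd_mem_support_of_mem_edges he) hP.2

lemma walk_eq_of_support_eq : ∀ {x y : α} (p q : H.Walk x y), p.support = q.support → p = q := by
  intro x y p
  induction p with
  | nil =>
      intro q hq
      cases q with
      | nil => rfl
      | cons h q' =>
          exfalso
          have := congrArg List.length hq
          simp [Walk.support_cons] at this
  | @cons x z y h p' ih =>
      intro q hq
      cases q with
      | nil =>
          exfalso
          have := congrArg List.length hq
          simp [Walk.support_cons] at this
      | @cons _ z' _ h' q' =>
          simp only [Walk.support_cons, List.cons.injEq] at hq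
          have hz : z = z' := by
            have h1 : p'.support.head? = q'.support.head? := by rw [hq.2]
            rw [p'.support_eq_cons, q'.support_eq_cons] at h1
            exact Option.some.inj h1
          subst hz
          rw [ih q' hq.2]

lemma walk_split (Pd : H.Dart → Prop) : ∀ {x y : α} (c : H.Walk x y),
    (∀ d ∈ c.darts, Pd d) ∨ ∃ (z z' : α) (c₁ : H.Walk x z) (hzz : H.Adj z z')
      (c₂ : H.Walk z' y), c = c₁.append (Walk.cons hzz c₂) ∧ (∀ d ∈ c₁.darts, Pd d) ∧
      ¬ Pd ⟨(z, z'), hzz⟩ := by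
  intro x y c
  induction c with
  | nil => left; simp
  | @cons x m y h d ih =>
      by_cases hP : Pd ⟨(x, m), h⟩
      · rcases ih with hall | ⟨z, z', c₁, hzz, c₂, heq, h₁, h₂⟩
        · left
          intro d' hd'
          rw [Walk.darts_cons, List.mem_cons] at hd'
          rcases hd' with rfl | hd'
          · exact hP
          · exact hall d' hd'
        · right
          refine ⟨z, z', Walk.cons h c₁, hzz, c₂, ?_, ?_, h₂⟩
          · rw [heq, Walk.cons_append]
          · intro d' hd'
            rw [Walk.darts_cons, List.mem_cons] at hd'
            rcases hd' with rfl | hd'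
            · exact hP
            · exact h₁ d' hd'
      · right
        exact ⟨x, m, Walk.nil, h, d, by simp, by simp, hP⟩




lemma gen_closed {H : SimpleGraph α} {C : Set (Set (Sym2 α))} (OK : H.Dart → Prop)
    (hC : ∀ {x : α} (c : H.Walk x x), c.IsCycle → (∀ d ∈ c.darts, OK d) →
      {e | e ∈ c.edges} ∈ C) :
    ∀ (n : ℕ) {x : α} (c : H.Walk x x), c.length ≤ n → (∀ d ∈ c.darts, OK d) →
      GeneratedBy C (chain c) := by
  classical
  intro n
  induction n with
  | zero =>
      intro x c hlen hOK
      have he : c.edges = [] := List.length_eq_zero_iff.mp (by rw [Walk.length_edges]; omega)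
      have : chain c = ∅ := by rw [chain, he]; rfl
      rw [this]; exact gen_empty
  | succ n ih =>
      intro x c hlen hOK
      by_cases h0 : c.length = 0
      · have he : c.edges = [] := List.length_eq_zero_iff.mp (by rw [Walk.length_edges]; omega)
        have : chain c = ∅ := by rw [chain, he]; rfl
        rw [this]; exact gen_empty
      · have hnnil : ¬c.Nil := by rw [Walk.nil_iff_length_eq]; exact h0
        obtain ⟨m, h, d, rfl⟩ := Walk.not_nil_iff.mp hnnil
        by_cases hnd : d.support.Nodup
        · -- tail nodup: cycle or length-2 case
          have hd_path : d.IsPath := Walk.IsPath.mk' hnd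
          by_cases hedge : s(x, m) ∈ d.edges
          · -- length-2 case
            have hd1 : d.length = 1 := path_end_edge d hd_path hedge
            cases d with
            | nil => simp at hd1
            | @cons _ k _ h₂ d₂ =>
                cases d₂ with
                | nil =>
                    have : chain (Walk.cons h (Walk.cons h₂ Walk.nil)) = ∅ := by
                      rw [chain]
                      simp only [Walk.edges_cons, Walk.edges_nil, chainL_cons, chainL_nil]
                      rw [Sym2.eq_swap (a := m) (b := x)]
                      simp [symmDiff_self, Set.bot_eq_empty]
                    rw [this]; exact gen_empty
                | cons h₃ d₃ => simp [Walk.length_cons] at hd1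
          · -- cycle
            have hcyc : (Walk.cons h d).IsCycle := (Walk.cons_isCycle_iff d h).mpr ⟨hd_path, hedge⟩
            have hnodup : (Walk.cons h d).edges.Nodup := hcyc.isCircuit.isTrail.edges_nodup
            exact gen_congr (chainL_nodup hnodup).symm (gen_mem (hC _ hcyc hOK))
        · -- duplicate vertex in tail
          obtain ⟨y, hy2⟩ : ∃ y, 2 ≤ d.support.count y := by
            by_contra hcon
            push_neg at hcon
            exact hnd (List.nodup_iff_count_le_one.mpr fun a => by have := hcon a; omega)
          have hy : y ∈ d.support := List.count_pos_iff.mp (by omega)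
          have hlen' : d.length ≤ n := by
            have := Walk.length_cons h d
            omega
          by_cases hyx : y = x
          · subst hyx
            set P := d.takeUntil y hy with hP
            set R := d.dropUntil y hy with hR
            have hspec : P.append R = d := d.take_spec hy
            have hcount : (P.support.count y) = 1 := d.count_support_takeUntil_eq_one hy
            have hsupp : d.support = P.support ++ R.support.tail := by
              rw [← hspec, Walk.support_append]
            have hRlen : 1 ≤ R.length := by
              by_contra hcon
              have h0' : R.length = 0 := by omega
              have htail : R.support.tail = [] := by
                have hls := R.length_support
                rw [h0'] at hls
                cases hsup : R.support with
                | nil => rw [hsup] at hls; simp at hls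
                | cons a l =>
                    rw [hsup] at hls
                    simp only [List.length_cons] at hls
                    have : l = [] := List.length_eq_zero_iff.mp (by omega)
                    simp [this]
              rw [hsupp, List.count_append, htail] at hy2
              simp at hy2
              omega
            have hedges : d.edges = P.edges ++ R.edges := by rw [← Walk.edges_append, hspec]
            have hdarts : d.darts = P.darts ++ R.darts := by rw [← Walk.darts_append, hspec]
            have hdlen : d.length = P.length + R.length := by rw [← Walk.length_append, hspec]
            have hmemP : ∀ d' ∈ P.darts, OK d' := fun d' hd' => hOK d'
              (by rw [Walk.darts_cons]
                  exact List.mem_cons_of_mem _ (hdarts ▸ List.mem_append_left _ hd'))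
            have hmemR : ∀ d' ∈ R.darts, OK d' := fun d' hd' => hOK d'
              (by rw [Walk.darts_cons]
                  exact List.mem_cons_of_mem _ (hdarts ▸ List.mem_append_right _ hd'))
            have key : chain (Walk.cons h d) =
                symmDiff (chain (Walk.cons h P)) (chain R) := by
              show chainL (Walk.cons h d).edges = _
              rw [Walk.edges_cons, hedges]
              show chainL (s(y, m) :: (P.edges ++ R.edges)) =
                symmDiff (chainL (s(y, m) :: P.edges)) (chainL R.edges)
              rw [chainL_cons, chainL_append, chainL_cons, symmDiff_assoc]
            rw [key]
            refine gen_symmDiff (ih (Walk.cons h P) ?_ ?_) (ih R ?_ ?_)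
            · rw [Walk.length_cons]; omega
            · intro d' hd'
              rw [Walk.darts_cons, List.mem_cons] at hd'
              rcases hd' with rfl | hd'
              · exact hOK _ (by rw [Walk.darts_cons]; exact List.mem_cons_self)
              · exact hmemP d' hd'
            · omega
            · exact hmemR
          · set P₁ := d.takeUntil y hy with hP₁
            set D := d.dropUntil y hy with hD0
            have hspec : P₁.append D = d := d.take_spec hy
            have hDnnil : ¬D.Nil := fun hnil =>
              hyx (Walk.eq_of_length_eq_zero (Walk.nil_iff_length_eq.mp hnil))
            obtain ⟨k, h₂, D₂, hD⟩ := Walk.not_nil_iff.mp hDnnil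
            have hcount : (P₁.support.count y) = 1 := d.count_support_takeUntil_eq_one hy
            have hsupp : d.support = P₁.support ++ D.support.tail := by
              rw [← hspec, Walk.support_append]
            have hyD₂ : y ∈ D₂.support := by
              have h1 : 1 ≤ D.support.tail.count y := by
                rw [hsupp, List.count_append] at hy2
                omega
              have htail : D.support.tail = D₂.support := by rw [hD, Walk.support_cons, List.tail_cons]
              rw [htail] at h1
              exact List.count_pos_iff.mp (by omega)
            set P₂ := D₂.takeUntil y hyD₂ with hP₂
            set R := D₂.dropUntil y hyD₂ with hR
            have hspec₂ : P₂.append R = D₂ := D₂.take_spec hyD₂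
            have hDedges : D.edges = s(y, k) :: (P₂.edges ++ R.edges) := by
              rw [hD, Walk.edges_cons, ← Walk.edges_append, hspec₂]
            have hDdarts : D.darts = (⟨(y, k), h₂⟩ : H.Dart) :: (P₂.darts ++ R.darts) := by
              rw [hD, Walk.darts_cons, ← Walk.darts_append, hspec₂]
            have hedges : d.edges = P₁.edges ++ (s(y, k) :: (P₂.edges ++ R.edges)) := by
              rw [← hspec, Walk.edges_append, hDedges]
            have hdarts : d.darts = P₁.darts ++ ((⟨(y, k), h₂⟩ : H.Dart) :: (P₂.darts ++ R.darts)) := by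
              rw [← hspec, Walk.darts_append, hDdarts]
            have hdlen : d.length = P₁.length + (1 + (P₂.length + R.length)) := by
              rw [← hspec, Walk.length_append, hD, Walk.length_cons, ← Walk.length_append, hspec₂]
              omega
            have hmem : ∀ d' ∈ d.darts, OK d' := fun d' hd' => hOK d'
              (by rw [Walk.darts_cons]; exact List.mem_cons_of_mem _ hd')
            have hmemP₁ : ∀ d' ∈ P₁.darts, OK d' := fun d' hd' => hmem d'
              (hdarts ▸ List.mem_append_left _ hd')
            have hmemP₂ : ∀ d' ∈ P₂.darts, OK d' := fun d' hd' => hmem d'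
              (hdarts ▸ List.mem_append_right _ (List.mem_cons_of_mem _ (List.mem_append_left _ hd')))
            have hmemR : ∀ d' ∈ R.darts, OK d' := fun d' hd' => hmem d'
              (hdarts ▸ List.mem_append_right _ (List.mem_cons_of_mem _ (List.mem_append_right _ hd')))
            have hmemk : OK (⟨(y, k), h₂⟩ : H.Dart) := hmem _
              (hdarts ▸ List.mem_append_right _ (List.mem_cons_self))
            have key : chain (Walk.cons h d) =
                symmDiff (chain (Walk.cons h₂ P₂)) (chain (Walk.cons h (P₁.append R))) := by
              simp only [chain_def, Walk.edges_cons, Walk.edges_append, hedges,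
                chainL_cons, chainL_append]
              ac_rfl
            rw [key]
            refine gen_symmDiff (ih (Walk.cons h₂ P₂) ?_ ?_) (ih (Walk.cons h (P₁.append R)) ?_ ?_)
            · rw [Walk.length_cons]; omega
            · intro d' hd'
              rw [Walk.darts_cons, List.mem_cons] at hd'
              rcases hd' with rfl | hd'
              · exact hmemk
              · exact hmemP₂ d' hd'
            · rw [Walk.length_cons, Walk.length_append]; omega
            · intro d' hd'
              rw [Walk.darts_cons, List.mem_cons] at hd'
              rcases hd' with rfl | hd'
              · exact hOK _ (by rw [Walk.darts_cons]; exact List.mem_cons_self)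
              · rw [Walk.darts_append, List.mem_append] at hd'
                rcases hd' with hd' | hd'
                · exact hmemP₁ d' hd'
                · exact hmemR d' hd'
section graph
variable {V : Type u} {G : SimpleGraph V} {v w : V} {r : ℕ}

lemma reach_tri {a b c : V} (h1 : G.Reachable a b) (h2 : G.Reachable b c) :
    G.dist a c ≤ G.dist a b + G.dist b c := by
  obtain ⟨p, hp⟩ := h1.exists_walk_length_eq_dist
  obtain ⟨q, hq⟩ := h2.exists_walk_length_eq_dist
  have := SimpleGraph.dist_le (p.append q)
  rwa [Walk.length_append, hp, hq] at this

lemma dvw_le_half (hdist : 2 * G.dist v w ≤ r) : G.dist v w ≤ r / 2 :=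
  (Nat.le_div_iff_mul_le (by norm_num)).mpr (by omega)

lemma subgraph_le_of {H₁ H₂ : G.Subgraph} (h1 : H₁.verts ⊆ H₂.verts)
    (h2 : ∀ ⦃a b : V⦄, H₁.Adj a b → H₂.Adj a b) : H₁ ≤ H₂ := ⟨h1, h2⟩

lemma geo_in_ball (a : V) : ∀ {y x : V} (p : G.Walk y x), G.Reachable a y →
    G.dist a y + p.length = G.dist a x → G.dist a x ≤ r / 2 →
    p.toSubgraph ≤ ball G a r := by
  intro y x p
  induction p with
  | nil =>
      intro hr h1 h2
      simp only [Walk.toSubgraph]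
      rw [singletonSubgraph_le_iff]
      refine ⟨hr, ?_⟩
      simp only [Walk.length_nil] at h1
      omega
  | @cons b c e h q ih =>
      intro hr h1 h2
      rw [Walk.length_cons] at h1
      have hrz : G.Reachable a c := hr.trans ⟨Walk.cons h Walk.nil⟩
      have h3 : G.dist a c ≤ G.dist a b + 1 := by
        have hbc : G.dist b c ≤ 1 := by
          have := SimpleGraph.dist_le (Walk.cons h (Walk.nil : G.Walk c c))
          simpa using this
        have := reach_tri hr ⟨Walk.cons h Walk.nil⟩
        omega
      have h4 : G.dist a e ≤ G.dist a c + q.length := by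
        have := reach_tri hrz (⟨q⟩ : G.Reachable c e)
        have := SimpleGraph.dist_le q
        omega
      have h5 : G.dist a c = G.dist a b + 1 := by omega
      have h6 : G.dist a c + q.length = G.dist a e := by omega
      simp only [Walk.toSubgraph]
      refine sup_le ?_ (ih hrz h6 h2)
      have hadj : (ball G a r).Adj b c :=
        ⟨h, ⟨hr, by omega⟩, ⟨hrz, by omega⟩, fun _ hc => by omega⟩
      exact SimpleGraph.subgraphOfAdj_le_of_adj _ hadj

lemma exists_core_path (hreach : G.Reachable v w) :
    ∃ p : G.Walk v w, p.IsPath ∧ p.length = G.dist v w := hreach.exists_path_of_dist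

lemma core_path_subset {p : G.Walk v w} (hp : p.IsPath) (hl : p.length = G.dist v w) :
    ∀ z ∈ p.support, z ∈ core G v w := fun z hz => ⟨p, hp, hl, hz⟩

lemma core_self_v (hreach : G.Reachable v w) : v ∈ core G v w := by
  obtain ⟨p, hp, hl⟩ := exists_core_path hreach
  exact ⟨p, hp, hl, p.start_mem_support⟩

lemma core_sum {x : V} (hx : x ∈ core G v w) :
    G.dist v x + G.dist x w = G.dist v w ∧ G.Reachable v x ∧ G.Reachable x w := by
  classical
  obtain ⟨p, hp, hl, hmem⟩ := hx
  have hspec := p.take_spec hmem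
  have hlen : (p.takeUntil x hmem).length + (p.dropUntil x hmem).length = G.dist v w := by
    have := congrArg Walk.length hspec
    rw [Walk.length_append] at this
    omega
  have h1 : G.dist v x ≤ (p.takeUntil x hmem).length := SimpleGraph.dist_le _
  have h2 : G.dist x w ≤ (p.dropUntil x hmem).length := SimpleGraph.dist_le _
  have hr1 : G.Reachable v x := ⟨p.takeUntil x hmem⟩
  have hr2 : G.Reachable x w := ⟨p.dropUntil x hmem⟩
  have h3 : G.dist v w ≤ G.dist v x + G.dist x w := reach_tri hr1 hr2
  exact ⟨by omega, hr1, hr2⟩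

lemma core_ball (hdist : 2 * G.dist v w ≤ r) {x : V} (hx : x ∈ core G v w) :
    x ∈ ballVerts G v r ∧ x ∈ ballVerts G w r := by
  obtain ⟨hsum, hr1, hr2⟩ := core_sum hx
  have hhalf := dvw_le_half hdist
  refine ⟨⟨hr1, by omega⟩, ⟨hr2.symm, ?_⟩⟩
  rw [SimpleGraph.dist_comm]
  omega

lemma core_adj_lift (hdist : 2 * G.dist v w ≤ r) {x y : V} (hx : x ∈ core G v w)
    (hy : y ∈ core G v w) (hadj : G.Adj x y) :
    (ball G v r).Adj x y ∧ (ball G w r).Adj x y := by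
  obtain ⟨hsx, hrx1, hrx2⟩ := core_sum hx
  obtain ⟨hsy, hry1, hry2⟩ := core_sum hy
  have hhalf := dvw_le_half hdist
  have hbx := core_ball hdist hx
  have hby := core_ball hdist hy
  constructor
  · refine ⟨hadj, hbx.1, hby.1, fun _ hc => ?_⟩
    have hxw : x = w := by
      have h1 : G.dist x w = 0 := by omega
      exact hrx2.dist_eq_zero_iff.mp h1
    have hyw : y = w := by
      have h1 : G.dist y w = 0 := by omega
      exact hry2.dist_eq_zero_iff.mp h1
    exact hadj.ne (hxw.trans hyw.symm)
  · refine ⟨hadj, hbx.2, hby.2, fun _ hc => ?_⟩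
    have haux1 : G.dist w x = G.dist x w := SimpleGraph.dist_comm
    have haux2 : G.dist w y = G.dist y w := SimpleGraph.dist_comm
    have hxv : x = v := by
      have h1 : G.dist v x = 0 := by omega
      exact (hrx1.dist_eq_zero_iff.mp h1).symm
    have hyv : y = v := by
      have h1 : G.dist v y = 0 := by omega
      exact (hry1.dist_eq_zero_iff.mp h1).symm
    exact hadj.ne (hxv.trans hyv.symm)

lemma walkIn_append_iff {B : G.Subgraph} {x y z : V} {p : G.Walk x y} {q : G.Walk y z} :
    WalkIn B (p.append q) ↔ WalkIn B p ∧ WalkIn B q := by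
  rw [WalkIn, Walk.toSubgraph_append, sup_le_iff]; rfl

lemma walkIn_nil {B : G.Subgraph} {x : V} (hx : x ∈ B.verts) :
    WalkIn B (Walk.nil : G.Walk x x) := by
  show G.singletonSubgraph x ≤ B
  rwa [singletonSubgraph_le_iff]

lemma walkIn_adj {B : G.Subgraph} {x y : V} {p : G.Walk x y} (hp : WalkIn B p)
    {d : G.Dart} (hd : d ∈ p.darts) : B.Adj d.fst d.snd := by
  refine hp.2 ?_
  rw [← Subgraph.mem_edgeSet, Walk.mem_edges_toSubgraph]
  exact List.mem_map_of_mem hd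

lemma walkIn_support {B : G.Subgraph} {x y z : V} {p : G.Walk x y} (hp : WalkIn B p)
    (hz : z ∈ p.support) : z ∈ B.verts :=
  hp.1 (p.mem_verts_toSubgraph.mpr hz)

lemma walkIn_bypass [DecidableEq V] {B : G.Subgraph} {x y : V} {p : G.Walk x y} (hp : WalkIn B p) :
    WalkIn B p.bypass := by
  refine subgraph_le_of (fun z hz => ?_) (fun a b hab => ?_)
  · exact walkIn_support hp (p.support_bypass_subset (p.bypass.mem_verts_toSubgraph.mp hz))
  · refine hp.2 ?_
    rw [← Subgraph.mem_edgeSet, Walk.mem_edges_toSubgraph]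
    exact p.edges_bypass_subset (p.bypass.mem_edges_toSubgraph.mp (Subgraph.mem_edgeSet.mp hab))

/-- `p` is an optimal (shortest) path from the core to its endpoint within `B`. -/
def IsOptIn (G : SimpleGraph V) (v w : V) (B : G.Subgraph) {c x : V} (p : G.Walk c x) : Prop :=
  p.IsPath ∧ WalkIn B p ∧ ∀ c' ∈ core G v w, ∀ q : G.Walk c' x, q.IsPath → WalkIn B q →
    p.length ≤ q.length

lemma mem_labelIn_iff {B : G.Subgraph} {x : V} {l : List V} :
    l ∈ labelIn G B (core G v w) x ↔ ∃ c, c ∈ core G v w ∧ ∃ p : G.Walk c x,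
      IsOptIn G v w B p ∧ l = p.support := by
  constructor
  · rintro ⟨c, hc, p, h1, h2, h3, h4⟩
    exact ⟨c, hc, p, ⟨h1, h2, h3⟩, h4⟩
  · rintro ⟨c, hc, p, ⟨h1, h2, h3⟩, h4⟩
    exact ⟨c, hc, p, h1, h2, h3, h4⟩

lemma opt_exists {B : G.Subgraph} {x : V}
    (hcand : ∃ c ∈ core G v w, ∃ p : G.Walk c x, p.IsPath ∧ WalkIn B p) :
    ∃ c, c ∈ core G v w ∧ ∃ p : G.Walk c x, IsOptIn G v w B p := by
  classical
  set S : Set ℕ := {n | ∃ c ∈ core G v w, ∃ p : G.Walk c x, p.IsPath ∧ WalkIn B p ∧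
    p.length = n} with hS
  have hne : S.Nonempty := by
    obtain ⟨c, hc, p, h1, h2⟩ := hcand
    exact ⟨p.length, c, hc, p, h1, h2, rfl⟩
  obtain ⟨c, hc, p, h1, h2, h3⟩ := Nat.sInf_mem hne
  refine ⟨c, hc, p, h1, h2, fun c' hc' q hq1 hq2 => ?_⟩
  rw [h3]
  exact Nat.sInf_le ⟨c', hc', q, hq1, hq2, rfl⟩

lemma ball_cand (hdist : 2 * G.dist v w ≤ r) {a x : V} (ha : a ∈ core G v w)
    (hx : x ∈ ballVerts G a r) :
    ∃ c ∈ core G v w, ∃ p : G.Walk c x, p.IsPath ∧ WalkIn (ball G a r) p := by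
  obtain ⟨p, hp, hl⟩ := hx.1.exists_path_of_dist
  refine ⟨a, ha, p, hp, ?_⟩
  exact geo_in_ball a p ⟨Walk.nil⟩ (by rw [SimpleGraph.dist_self]; omega) hx.2

lemma ball_mem_of_walkIn {a x y : V} {p : G.Walk x y} (hp : WalkIn (ball G a r) p)
    {z : V} (hz : z ∈ p.support) : z ∈ ballVerts G a r :=
  walkIn_support hp hz

lemma core_label {a x : V} (hx : x ∈ core G v w) (hb : x ∈ ballVerts G a r) :
    labelIn G (ball G a r) (core G v w) x = {[x]} := by
  apply Set.Subset.antisymm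
  · rintro l ⟨c, hc, p, h1, h2, h3, h4⟩
    have h0 : p.length ≤ 0 := h3 x hx Walk.nil Walk.IsPath.nil (walkIn_nil hb)
    have hcx : c = x := Walk.eq_of_length_eq_zero (Nat.le_zero.mp h0)
    subst hcx
    cases p with
    | nil => simp [h4]
    | cons h q => simp [Walk.length_cons] at h0
  · rintro l rfl
    exact ⟨x, hx, Walk.nil, Walk.IsPath.nil, walkIn_nil hb, fun c' hc' q hq1 hq2 => by
      simp only [Walk.length_nil]; exact Nat.zero_le _, by simp⟩

lemma opt_prefix {B : G.Subgraph} {c x : V} {p : G.Walk c x} (hc : c ∈ core G v w)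
    (hopt : IsOptIn G v w B p) {z : V} (hz : z ∈ p.support) [DecidableEq V] :
    IsOptIn G v w B (p.takeUntil z hz) ∧ WalkIn B (p.dropUntil z hz) := by
  have hspec := p.take_spec hz
  have hIn : WalkIn B (p.takeUntil z hz) ∧ WalkIn B (p.dropUntil z hz) := by
    rw [← walkIn_append_iff, hspec]
    exact hopt.2.1
  have hlen : (p.takeUntil z hz).length + (p.dropUntil z hz).length = p.length := by
    have := congrArg Walk.length hspec
    rwa [Walk.length_append] at this
  refine ⟨⟨hopt.1.takeUntil hz, hIn.1, fun c' hc' q hq1 hq2 => ?_⟩, hIn.2⟩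
  by_contra hlt
  push_neg at hlt
  set W := q.append (p.dropUntil z hz) with hW
  have hWb := hopt.2.2 c' hc' W.bypass W.bypass_isPath
    (walkIn_bypass (walkIn_append_iff.mpr ⟨hq2, hIn.2⟩))
  have hWlen : W.length = q.length + (p.dropUntil z hz).length := Walk.length_append _ _
  have := W.length_bypass_le
  omega

lemma opt_exchange {B : G.Subgraph} {c c' x : V} {p : G.Walk c x} (hc : c ∈ core G v w)
    (hc' : c' ∈ core G v w) (hopt : IsOptIn G v w B p) {z : V} (hz : z ∈ p.support)
    [DecidableEq V] {q : G.Walk c' z} (hq1 : q.IsPath) (hq2 : WalkIn B q)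
    (hqlen : q.length = (p.takeUntil z hz).length) :
    IsOptIn G v w B (q.append (p.dropUntil z hz)) ∧
      (q.append (p.dropUntil z hz)).length = p.length := by
  have hpre := opt_prefix hc hopt hz
  have hlen : (p.takeUntil z hz).length + (p.dropUntil z hz).length = p.length := by
    have := congrArg Walk.length (p.take_spec hz)
    rwa [Walk.length_append] at this
  set W := q.append (p.dropUntil z hz) with hW
  have hWIn : WalkIn B W := walkIn_append_iff.mpr ⟨hq2, hpre.2⟩
  have hWlen : W.length = p.length := by
    rw [hW, Walk.length_append]; omega
  have hWb := hopt.2.2 c' hc' W.bypass W.bypass_isPath (walkIn_bypass hWIn)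
  have hWpath : W.IsPath := by
    have hble := W.length_bypass_le
    have heq : W.bypass = W := W.bypass_eq_self_of_length_le (by omega)
    rw [← heq]
    exact W.bypass_isPath
  refine ⟨⟨hWpath, hWIn, fun c₄ hc₄ q₄ hq₄1 hq₄2 => ?_⟩, hWlen⟩
  rw [hWlen]
  exact hopt.2.2 c₄ hc₄ q₄ hq₄1 hq₄2

lemma start_eq_of_support_eq {x c c' : V} {p : G.Walk c x} {q : G.Walk c' x}
    (h : q.support = p.support) : c' = c := by
  have h1 : q.support.head? = p.support.head? := by rw [h]
  rw [p.support_eq_cons, q.support_eq_cons] at h1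
  exact Option.some.inj h1

lemma opt_transfer {B' : G.Subgraph} {c x : V} {p : G.Walk c x}
    (hps : p.support ∈ labelIn G B' (core G v w) x) : IsOptIn G v w B' p := by
  obtain ⟨c₃, hc₃, p₃, hp₃opt, hp₃s⟩ := mem_labelIn_iff.mp hps
  have hcc : c₃ = c := start_eq_of_support_eq hp₃s.symm
  subst hcc
  rwa [walk_eq_of_support_eq p₃ p hp₃s.symm] at hp₃opt

lemma label_sub {B B' : G.Subgraph} {c x : V} {p : G.Walk c x} (hc : c ∈ core G v w)
    (hopt : IsOptIn G v w B p) (hopt' : IsOptIn G v w B' p)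
    (hlab : labelIn G B (core G v w) x ⊆ labelIn G B' (core G v w) x)
    {z : V} (hz : z ∈ p.support) [DecidableEq V] :
    labelIn G B (core G v w) z ⊆ labelIn G B' (core G v w) z := by
  intro l hl
  obtain ⟨c', hc', q, hqopt, rfl⟩ := mem_labelIn_iff.mp hl
  have hpre := opt_prefix hc hopt hz
  have hpre' := opt_prefix hc hopt' hz
  have hql : q.length = (p.takeUntil z hz).length :=
    le_antisymm (hqopt.2.2 c hc _ hpre.1.1 hpre.1.2.1)
      (hpre.1.2.2 c' hc' q hqopt.1 hqopt.2.1)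
  obtain ⟨hWopt, hWlen⟩ := opt_exchange hc hc' hopt hz hqopt.1 hqopt.2.1 hql
  set W := q.append (p.dropUntil z hz) with hWdef
  have hWmem : W.support ∈ labelIn G B' (core G v w) x :=
    hlab (mem_labelIn_iff.mpr ⟨c', hc', W, hWopt, rfl⟩)
  have hWopt' : IsOptIn G v w B' W := opt_transfer hWmem
  have hWIn' : WalkIn B' W := hWopt'.2.1
  have hWmin' : ∀ c₄ ∈ core G v w, ∀ q₄ : G.Walk c₄ x, q₄.IsPath → WalkIn B' q₄ →
      W.length ≤ q₄.length := hWopt'.2.2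
  have hdropIn' : WalkIn B' (p.dropUntil z hz) := (walkIn_append_iff.mp hWIn').2
  have hqIn' : WalkIn B' q := (walkIn_append_iff.mp hWIn').1
  refine mem_labelIn_iff.mpr ⟨c', hc', q, ⟨hqopt.1, hqIn', fun c₄ hc₄ q₄ hq₄1 hq₄2 => ?_⟩, rfl⟩
  have hW₄In : WalkIn B' (q₄.append (p.dropUntil z hz)) :=
    walkIn_append_iff.mpr ⟨hq₄2, hdropIn'⟩
  have h1 := hWmin' c₄ hc₄ _ (q₄.append (p.dropUntil z hz)).bypass_isPath
    (walkIn_bypass hW₄In)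
  have h2 := (q₄.append (p.dropUntil z hz)).length_bypass_le
  have h3 : (q₄.append (p.dropUntil z hz)).length = q₄.length +
      (p.dropUntil z hz).length := Walk.length_append _ _
  have h4 : W.length = q.length + (p.dropUntil z hz).length := Walk.length_append _ _
  omega

lemma shared_data (hreach : G.Reachable v w) (hdist : 2 * G.dist v w ≤ r) {x : V}
    (hx₁ : x ∈ ballVerts G v r) (hx₂ : x ∈ ballVerts G w r)
    (hlab : labelIn G (ball G v r) (core G v w) x = labelIn G (ball G w r) (core G v w) x) :
    ∃ c, c ∈ core G v w ∧ ∃ p : G.Walk c x,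
      (∀ z ∈ p.support, z ∈ ballVerts G v r ∧ z ∈ ballVerts G w r ∧
        labelIn G (ball G v r) (core G v w) z = labelIn G (ball G w r) (core G v w) z) ∧
      (∀ d ∈ p.darts, (ball G v r).Adj d.fst d.snd ∧ (ball G w r).Adj d.fst d.snd) := by
  classical
  obtain ⟨c, hc, p, hopt⟩ := opt_exists (ball_cand hdist (core_self_v hreach) hx₁)
  have hmem : p.support ∈ labelIn G (ball G w r) (core G v w) x :=
    hlab ▸ mem_labelIn_iff.mpr ⟨c, hc, p, hopt, rfl⟩
  have hopt₂ : IsOptIn G v w (ball G w r) p := opt_transfer hmem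
  refine ⟨c, hc, p, fun z hz => ?_, fun d hd => ?_⟩
  · refine ⟨walkIn_support hopt.2.1 hz, walkIn_support hopt₂.2.1 hz, ?_⟩
    apply Set.Subset.antisymm
    · exact label_sub hc hopt hopt₂ (le_of_eq hlab) hz
    · exact label_sub hc hopt₂ hopt (le_of_eq hlab.symm) hz
  · exact ⟨walkIn_adj hopt.2.1 hd, walkIn_adj hopt₂.2.1 hd⟩

/-- `d` is a dart of the copy of the ball around `a`. -/
def sideOK (a : V) (d : (expl G v w r).Dart) : Prop :=
  inCopy G v w r a d.fst ∧ inCopy G v w r a d.snd ∧ (ball G a r).Adj d.fst.1 d.snd.1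

/-- `d` is a dart valid in both ball copies. -/
def DOK (d : (expl G v w r).Dart) : Prop :=
  sideOK (G := G) (r := r) v d ∧ sideOK (G := G) (r := r) w d

lemma dart_cases (d : (expl G v w r).Dart) :
    sideOK (G := G) (r := r) v d ∨ sideOK (G := G) (r := r) w d := d.adj

lemma sideOK_symm {a : V} {d : (expl G v w r).Dart} (h : sideOK (G := G) (r := r) a d) :
    sideOK (G := G) (r := r) a d.symm := ⟨h.2.1, h.1, h.2.2.symm⟩

lemma DOK_symm {d : (expl G v w r).Dart} (h : DOK (G := G) (v := v) (w := w) (r := r) d) :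
    DOK (G := G) (v := v) (w := w) (r := r) d.symm := ⟨sideOK_symm h.1, sideOK_symm h.2⟩

lemma reverse_darts_prop {P : (expl G v w r).Dart → Prop}
    (hP : ∀ d, P d → P d.symm) {x y : EVert V} {T : (expl G v w r).Walk x y}
    (hT : ∀ d ∈ T.darts, P d) : ∀ d ∈ T.reverse.darts, P d := by
  intro d hd
  rw [Walk.darts_reverse, List.mem_reverse, List.mem_map] at hd
  obtain ⟨d₀, hd₀, rfl⟩ := hd
  exact hP d₀ (hT d₀ hd₀)

lemma lift_walk : ∀ {x y : V} (q : G.Walk x y),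
    (∀ z ∈ q.support, z ∈ ballVerts G v r ∧ z ∈ ballVerts G w r ∧
      labelIn G (ball G v r) (core G v w) z = labelIn G (ball G w r) (core G v w) z) →
    (∀ d ∈ q.darts, (ball G v r).Adj d.fst d.snd ∧ (ball G w r).Adj d.fst d.snd) →
    ∃ Q : (expl G v w r).Walk (x, labelIn G (ball G v r) (core G v w) x)
      (y, labelIn G (ball G v r) (core G v w) y),
      ∀ d ∈ Q.darts, DOK (G := G) (v := v) (w := w) (r := r) d := by
  intro x y q
  induction q with
  | nil => intro _ _; exact ⟨Walk.nil, by simp⟩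
  | @cons b c e h q' ih =>
      intro hv hd
      have hb := hv b (by simp)
      have hc := hv c (by rw [Walk.support_cons]; exact List.mem_cons_of_mem _ q'.start_mem_support)
      have hdart := hd ⟨(b, c), h⟩ (by simp)
      have hiv_b : inCopy G v w r v (b, labelIn G (ball G v r) (core G v w) b) := ⟨hb.1, rfl⟩
      have hiw_b : inCopy G v w r w (b, labelIn G (ball G v r) (core G v w) b) :=
        ⟨hb.2.1, hb.2.2⟩
      have hiv_c : inCopy G v w r v (c, labelIn G (ball G v r) (core G v w) c) := ⟨hc.1, rfl⟩
      have hiw_c : inCopy G v w r w (c, labelIn G (ball G v r) (core G v w) c) :=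
        ⟨hc.2.1, hc.2.2⟩
      have hAdj : (expl G v w r).Adj (b, labelIn G (ball G v r) (core G v w) b)
          (c, labelIn G (ball G v r) (core G v w) c) :=
        Or.inl ⟨hiv_b, hiv_c, hdart.1⟩
      obtain ⟨Q', hQ'⟩ := ih (fun z hz => hv z (by rw [Walk.support_cons]; exact List.mem_cons_of_mem _ hz)) (fun d hd' => hd d (by rw [Walk.darts_cons]; exact List.mem_cons_of_mem _ hd'))
      refine ⟨Walk.cons hAdj Q', ?_⟩
      intro d hd'
      rw [Walk.darts_cons, List.mem_cons] at hd'
      rcases hd' with rfl | hd'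
      · exact ⟨⟨hiv_b, hiv_c, hdart.1⟩, ⟨hiw_b, hiw_c, hdart.2⟩⟩
      · exact hQ' d hd'

lemma core_to_base (hreach : G.Reachable v w) (hdist : 2 * G.dist v w ≤ r) {c : V}
    (hc : c ∈ core G v w) :
    ∃ Q : (expl G v w r).Walk (v, labelIn G (ball G v r) (core G v w) v)
      (c, labelIn G (ball G v r) (core G v w) c),
      ∀ d ∈ Q.darts, DOK (G := G) (v := v) (w := w) (r := r) d := by
  classical
  obtain ⟨π, hπ, hπl, hmem⟩ := hc
  have hcore : ∀ z ∈ π.support, z ∈ core G v w := core_path_subset hπ hπl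
  refine lift_walk (π.takeUntil c hmem) (fun z hz => ?_) (fun d hd => ?_)
  · have hzc : z ∈ core G v w := hcore z (π.support_takeUntil_subset hmem hz)
    have hb := core_ball hdist hzc
    exact ⟨hb.1, hb.2, by rw [core_label hzc hb.1, core_label hzc hb.2]⟩
  · have hd' : d ∈ π.darts := π.darts_takeUntil_subset hmem hd
    have h1 : d.fst ∈ core G v w := hcore _ (Walk.dart_fst_mem_support_of_mem_darts _ hd')
    have h2 : d.snd ∈ core G v w := hcore _ (Walk.dart_snd_mem_support_of_mem_darts _ hd')
    exact core_adj_lift hdist h1 h2 d.adj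

lemma shared_to_base (hreach : G.Reachable v w) (hdist : 2 * G.dist v w ≤ r) {p : EVert V}
    (hp : inCopy G v w r v p ∧ inCopy G v w r w p) :
    ∃ T : (expl G v w r).Walk (v, labelIn G (ball G v r) (core G v w) v) p,
      ∀ d ∈ T.darts, DOK (G := G) (v := v) (w := w) (r := r) d := by
  have hlab : labelIn G (ball G v r) (core G v w) p.1 =
      labelIn G (ball G w r) (core G v w) p.1 := by
    rw [← hp.1.2, ← hp.2.2]
  obtain ⟨c, hc, q, hq1, hq2⟩ := shared_data hreach hdist hp.1.1 hp.2.1 hlab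
  obtain ⟨Q, hQ⟩ := lift_walk (v := v) (w := w) (r := r) q hq1 hq2
  obtain ⟨Q₀, hQ₀⟩ := core_to_base hreach hdist hc
  have hpe : p = (p.1, labelIn G (ball G v r) (core G v w) p.1) := by
    rw [← hp.1.2]
  refine ⟨(Q₀.append Q).copy rfl hpe.symm, ?_⟩
  intro d hd
  rw [Walk.darts_copy, Walk.darts_append, List.mem_append] at hd
  rcases hd with hd | hd
  · exact hQ₀ d hd
  · exact hQ d hd

lemma shared_walk (hreach : G.Reachable v w) (hdist : 2 * G.dist v w ≤ r) {p q : EVert V}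
    (hp : inCopy G v w r v p ∧ inCopy G v w r w p)
    (hq : inCopy G v w r v q ∧ inCopy G v w r w q) :
    ∃ T : (expl G v w r).Walk p q,
      ∀ d ∈ T.darts, DOK (G := G) (v := v) (w := w) (r := r) d := by
  obtain ⟨T₁, hT₁⟩ := shared_to_base hreach hdist hp
  obtain ⟨T₂, hT₂⟩ := shared_to_base hreach hdist hq
  refine ⟨T₁.reverse.append T₂, ?_⟩
  intro d hd
  rw [Walk.darts_append, List.mem_append] at hd
  rcases hd with hd | hd
  · exact reverse_darts_prop (fun _ h₀ => DOK_symm h₀) hT₁ d hd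
  · exact hT₂ d hd

/-- The cycles of the two embedded balls. -/
def cycSet (G : SimpleGraph V) (v w : V) (r : ℕ) : Set (Set (Sym2 (EVert V))) :=
  {S | ∃ (u' : EVert V) (c : (expl G v w r).Walk u' u'), c.IsCycle ∧
    (BallCopyCycle G v w r v c ∨ BallCopyCycle G v w r w c) ∧ S = walkEdgeSet c}

lemma hC_side {a : V} (hav : a = v ∨ a = w) : ∀ {x : EVert V} (c : (expl G v w r).Walk x x),
    c.IsCycle → (∀ d ∈ c.darts, sideOK (G := G) (r := r) a d) →
    {e | e ∈ c.edges} ∈ cycSet G v w r := by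
  intro x c hcyc hOK
  have hnnil : ¬c.Nil := by
    have h3 := hcyc.three_le_length
    rw [Walk.nil_iff_length_eq]; omega
  have hsupp : ∀ p ∈ c.support, inCopy G v w r a p :=
    supp_prop _ c hnnil fun d hd => ⟨(hOK d hd).1, (hOK d hd).2.1⟩
  have hb : BallCopyCycle G v w r a c := ⟨hsupp, fun d hd => (hOK d hd).2.2⟩
  refine ⟨x, c, hcyc, ?_, rfl⟩
  rcases hav with rfl | rfl
  · exact Or.inl hb
  · exact Or.inr hb

noncomputable def pwB : (expl G v w r).Dart → Bool := fun d =>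
  @decide (¬ sideOK (G := G) (r := r) v d) (Classical.propDecidable _)

lemma pwB_iff (d : (expl G v w r).Dart) :
    pwB (G := G) (v := v) (w := w) (r := r) d = true ↔ ¬ sideOK (G := G) (r := r) v d := by
  simp [pwB]

noncomputable def pwCount (l : List ((expl G v w r).Dart)) : ℕ :=
  (l.filter (pwB (G := G) (v := v) (w := w) (r := r))).length

noncomputable def pwTake (l : List ((expl G v w r).Dart)) : ℕ :=
  (l.takeWhile (pwB (G := G) (v := v) (w := w) (r := r))).length

lemma pwCount_append (l₁ l₂ : List ((expl G v w r).Dart)) :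
    pwCount (G := G) (v := v) (w := w) (r := r) (l₁ ++ l₂) =
      pwCount (G := G) (v := v) (w := w) (r := r) l₁ +
      pwCount (G := G) (v := v) (w := w) (r := r) l₂ := by
  simp [pwCount, List.filter_append]

lemma pwCount_perm {l₁ l₂ : List ((expl G v w r).Dart)} (h : l₁.Perm l₂) :
    pwCount (G := G) (v := v) (w := w) (r := r) l₁ =
      pwCount (G := G) (v := v) (w := w) (r := r) l₂ :=
  (h.filter _).length_eq

lemma pwCount_cons_pos {d : (expl G v w r).Dart} (hd : ¬ sideOK (G := G) (r := r) v d)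
    (l : List ((expl G v w r).Dart)) :
    pwCount (G := G) (v := v) (w := w) (r := r) (d :: l) =
      pwCount (G := G) (v := v) (w := w) (r := r) l + 1 := by
  have hb : pwB (G := G) (v := v) (w := w) (r := r) d = true := (pwB_iff d).mpr hd
  simp [pwCount, List.filter_cons, hb]

lemma pwCount_cons_neg {d : (expl G v w r).Dart} (hd : sideOK (G := G) (r := r) v d)
    (l : List ((expl G v w r).Dart)) :
    pwCount (G := G) (v := v) (w := w) (r := r) (d :: l) =
      pwCount (G := G) (v := v) (w := w) (r := r) l := by
  have hb : pwB (G := G) (v := v) (w := w) (r := r) d = false := by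
    rw [Bool.eq_false_iff, Ne, pwB_iff]
    exact not_not_intro hd
  simp [pwCount, List.filter_cons, hb]

lemma pwCount_eq_zero {l : List ((expl G v w r).Dart)}
    (h : ∀ d ∈ l, sideOK (G := G) (r := r) v d) :
    pwCount (G := G) (v := v) (w := w) (r := r) l = 0 := by
  induction l with
  | nil => rfl
  | cons a t ih =>
      rw [pwCount_cons_neg (h a (List.mem_cons_self))]
      exact ih fun d hd => h d (List.mem_cons_of_mem _ hd)

lemma pwCount_all {l : List ((expl G v w r).Dart)}
    (h : ∀ d ∈ l, ¬ sideOK (G := G) (r := r) v d) :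
    pwCount (G := G) (v := v) (w := w) (r := r) l = l.length := by
  induction l with
  | nil => rfl
  | cons a t ih =>
      rw [pwCount_cons_pos (h a (List.mem_cons_self)), List.length_cons,
        ih fun d hd => h d (List.mem_cons_of_mem _ hd)]

lemma pwCount_pos {l : List ((expl G v w r).Dart)} {d : (expl G v w r).Dart} (hd : d ∈ l)
    (hpw : ¬ sideOK (G := G) (r := r) v d) :
    1 ≤ pwCount (G := G) (v := v) (w := w) (r := r) l := by
  induction l with
  | nil => simp at hd
  | cons a t ih =>
      rcases List.mem_cons.mp hd with rfl | hd'
      · rw [pwCount_cons_pos hpw]; omega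
      · by_cases ha : sideOK (G := G) (r := r) v a
        · rw [pwCount_cons_neg ha]; exact ih hd'
        · rw [pwCount_cons_pos ha]; omega

lemma pwTake_cons_pos {d : (expl G v w r).Dart} (hd : ¬ sideOK (G := G) (r := r) v d)
    (l : List ((expl G v w r).Dart)) :
    pwTake (G := G) (v := v) (w := w) (r := r) (d :: l) =
      pwTake (G := G) (v := v) (w := w) (r := r) l + 1 := by
  have hb : pwB (G := G) (v := v) (w := w) (r := r) d = true := (pwB_iff d).mpr hd
  simp [pwTake, List.takeWhile_cons, hb]

lemma pwTake_append {l l' : List ((expl G v w r).Dart)}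
    (h : ∃ a ∈ l, sideOK (G := G) (r := r) v a) :
    pwTake (G := G) (v := v) (w := w) (r := r) (l ++ l') =
      pwTake (G := G) (v := v) (w := w) (r := r) l := by
  induction l with
  | nil => obtain ⟨a, ha, -⟩ := h; simp at ha
  | cons a t ih =>
      by_cases ha : sideOK (G := G) (r := r) v a
      · have hb : pwB (G := G) (v := v) (w := w) (r := r) a = false := by
          rw [Bool.eq_false_iff, Ne, pwB_iff]
          exact not_not_intro ha
        simp [pwTake, List.takeWhile_cons, hb]
      · have hb : pwB (G := G) (v := v) (w := w) (r := r) a = true := (pwB_iff a).mpr ha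
        obtain ⟨a', ha', hsa'⟩ := h
        have ha'' : a' ∈ t := by
          rcases List.mem_cons.mp ha' with rfl | h'
          · exact absurd hsa' ha
          · exact h'
        have := ih ⟨a', ha'', hsa'⟩
        simp only [pwTake, List.takeWhile_cons, hb, List.cons_append, List.length_cons,
          if_true] at this ⊢
        omega

lemma chain_rev {H : SimpleGraph (EVert V)} {x y : EVert V} (T : H.Walk x y) :
    chain T.reverse = chain T :=
  chainL_perm (by rw [Walk.edges_reverse]; exact List.reverse_perm _)

lemma cancel_helper (M A T Y : Set (Sym2 (EVert V))) :
    symmDiff (symmDiff A T) (symmDiff M (symmDiff T Y)) = symmDiff M (symmDiff A Y) := by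
  have h : symmDiff (symmDiff A T) (symmDiff M (symmDiff T Y)) =
      symmDiff (symmDiff T T) (symmDiff M (symmDiff A Y)) := by ac_rfl
  rw [h, symmDiff_self, bot_symmDiff]

lemma cancel_helper₀ (M A T : Set (Sym2 (EVert V))) :
    symmDiff (symmDiff A T) (symmDiff M T) = symmDiff M A := by
  have h : symmDiff (symmDiff A T) (symmDiff M T) =
      symmDiff (symmDiff T T) (symmDiff M A) := by ac_rfl
  rw [h, symmDiff_self, bot_symmDiff]

lemma main_ind (hreach : G.Reachable v w) (hdist : 2 * G.dist v w ≤ r) :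
    ∀ (k m : ℕ) {u₀ : EVert V} (c : (expl G v w r).Walk u₀ u₀),
      pwCount (G := G) (v := v) (w := w) (r := r) c.darts < k →
      pwTake (G := G) (v := v) (w := w) (r := r) c.darts < m →
      GeneratedBy (cycSet G v w r) (chain c) := by
  intro k
  induction k with
  | zero => intro m u₀ c h _; omega
  | succ k ihk =>
      intro m
      induction m with
      | zero => intro u₀ c _ h; omega
      | succ m ihm =>
          intro u₀ c hcount htake
          by_cases hall : ∀ d ∈ c.darts, sideOK (G := G) (r := r) v d
          · exact gen_closed _ (fun c' h1 h2 => hC_side (Or.inl rfl) c' h1 h2)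
              c.length c le_rfl hall
          by_cases hallw : ∀ d ∈ c.darts, sideOK (G := G) (r := r) w d
          · exact gen_closed _ (fun c' h1 h2 => hC_side (Or.inr rfl) c' h1 h2)
              c.length c le_rfl hallw
          push_neg at hall
          obtain ⟨d₀, hd₀, hd₀n⟩ := hall
          have hnnil : ¬c.Nil := by
            intro hnil
            rw [Walk.nil_iff_length_eq] at hnil
            have hld := c.length_darts
            rw [hnil] at hld
            rw [List.length_eq_zero_iff.mp hld] at hd₀
            simp at hd₀
          obtain ⟨x₂, h, d, rfl⟩ := Walk.not_nil_iff.mp hnnil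
          by_cases hfirst : sideOK (G := G) (r := r) v (⟨(u₀, x₂), h⟩ : (expl G v w r).Dart)
          · -- surgery branch
            rcases walk_split (sideOK (G := G) (r := r) v) (Walk.cons h d) with hallv | hsplit
            · exact gen_closed _ (fun c' h1 h2 => hC_side (Or.inl rfl) c' h1 h2)
                (Walk.cons h d).length _ le_rfl hallv
            obtain ⟨a₁, b₁, M₁, hzz, rest, hceq, hM₁, hzznOK⟩ := hsplit
            -- M₁ is nonnil
            have hM₁nnil : ¬M₁.Nil := by
              intro hnil
              have hMd : M₁.darts = [] := by
                rw [← List.length_eq_zero_iff, M₁.length_darts]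
                rwa [Walk.nil_iff_length_eq] at hnil
              have hdd := congrArg Walk.darts hceq
              rw [Walk.darts_cons, Walk.darts_append, hMd, List.nil_append,
                Walk.darts_cons] at hdd
              have hhead := (List.cons.injEq _ _ _ _).mp hdd
              exact hzznOK (hhead.1 ▸ hfirst)
            -- the pure-w dart of the junction
            have hzzW : sideOK (G := G) (r := r) w (⟨(a₁, b₁), hzz⟩ : (expl G v w r).Dart) :=
              (dart_cases _).resolve_left hzznOK
            -- a₁ is shared
            have ha₁v : inCopy G v w r v a₁ :=
              end_prop (fun z => inCopy G v w r v z) M₁ hM₁nnil (fun d' hd' => (hM₁ d' hd').2.1)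
            have ha₁w : inCopy G v w r w a₁ := hzzW.1
            rcases walk_split (fun d' => ¬ sideOK (G := G) (r := r) v d')
                (Walk.cons hzz rest) with hallpw | hsplit₂
            · -- whole tail is a pure-w run ending at the basepoint
              set A : (expl G v w r).Walk a₁ u₀ := Walk.cons hzz rest with hA
              have hAnnil : ¬A.Nil := by
                rw [hA, Walk.nil_iff_length_eq, Walk.length_cons]; omega
              have hAw : ∀ d' ∈ A.darts, sideOK (G := G) (r := r) w d' := fun d' hd' =>
                (dart_cases d').resolve_left (hallpw d' hd')
              have hu₀w : inCopy G v w r w u₀ :=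
                end_prop (fun z => inCopy G v w r w z) A hAnnil (fun d' hd' => (hAw d' hd').2.1)
              have hu₀v : inCopy G v w r v u₀ :=
                start_prop (fun z => inCopy G v w r v z) M₁ hM₁nnil
                  (fun d' hd' => (hM₁ d' hd').1)
              obtain ⟨T, hT⟩ := shared_walk hreach hdist ⟨ha₁v, ha₁w⟩ ⟨hu₀v, hu₀w⟩
              set Z₁ : (expl G v w r).Walk a₁ a₁ := A.append T.reverse with hZ₁
              set Z₂ : (expl G v w r).Walk u₀ u₀ := M₁.append T with hZ₂
              have hZ₁OK : ∀ d' ∈ Z₁.darts, sideOK (G := G) (r := r) w d' := by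
                intro d' hd'
                rw [hZ₁, Walk.darts_append, List.mem_append] at hd'
                rcases hd' with hd' | hd'
                · exact hAw d' hd'
                · exact (reverse_darts_prop (fun _ h₀ => DOK_symm h₀) hT d' hd').2
              have hg1 : GeneratedBy (cycSet G v w r) (chain Z₁) :=
                gen_closed _ (fun c' h1 h2 => hC_side (Or.inr rfl) c' h1 h2)
                  Z₁.length Z₁ le_rfl hZ₁OK
              have hZ₂c : pwCount (G := G) (v := v) (w := w) (r := r) Z₂.darts = 0 := by
                rw [hZ₂, Walk.darts_append, pwCount_append, pwCount_eq_zero hM₁,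
                  pwCount_eq_zero (fun d' hd' => (hT d' hd').1)]
              have hdmem : (⟨(a₁, b₁), hzz⟩ : (expl G v w r).Dart) ∈ (Walk.cons h d).darts := by
                rw [hceq, Walk.darts_append]
                exact List.mem_append_right _ (by rw [Walk.darts_cons]; exact List.mem_cons_self)
              have hk1 : 1 ≤ pwCount (G := G) (v := v) (w := w) (r := r)
                  (Walk.cons h d).darts := pwCount_pos hdmem hzznOK
              have hg2 : GeneratedBy (cycSet G v w r) (chain Z₂) :=
                ihk (pwTake (G := G) (v := v) (w := w) (r := r) Z₂.darts + 1) Z₂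
                  (by omega) (lt_add_one _)
              have h1 : chain (Walk.cons h d) = symmDiff (chain M₁) (chain A) := by
                rw [hceq, chain_def, Walk.edges_append, chainL_append]; rfl
              have h2 : chain Z₁ = symmDiff (chain A) (chain T) := by
                rw [hZ₁, chain_def, Walk.edges_append, chainL_append, ← chain_def,
                  ← chain_def, chain_rev]
              have h3 : chain Z₂ = symmDiff (chain M₁) (chain T) := by
                rw [hZ₂, chain_def, Walk.edges_append, chainL_append]; rfl
              have hkey : chain (Walk.cons h d) = symmDiff (chain Z₁) (chain Z₂) := by
                rw [h1, h2, h3, cancel_helper₀]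
              exact gen_congr hkey.symm (gen_symmDiff hg1 hg2)
            · obtain ⟨b₂, b₃, A₁, h₃, M₂, heq₂, hA₁, h₃OK'⟩ := hsplit₂
              have h₃OK : sideOK (G := G) (r := r) v (⟨(b₂, b₃), h₃⟩ : (expl G v w r).Dart) :=
                not_not.mp h₃OK'
              have hA₁nnil : ¬A₁.Nil := by
                intro hnil
                have hAd : A₁.darts = [] := by
                  rw [← List.length_eq_zero_iff, A₁.length_darts]
                  rwa [Walk.nil_iff_length_eq] at hnil
                have hdd := congrArg Walk.darts heq₂
                rw [Walk.darts_cons, Walk.darts_append, hAd, List.nil_append,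
                  Walk.darts_cons] at hdd
                have hhead := (List.cons.injEq _ _ _ _).mp hdd
                have hcontra := h₃OK
                rw [← hhead.1] at hcontra
                exact hzznOK hcontra
              have hA₁w : ∀ d' ∈ A₁.darts, sideOK (G := G) (r := r) w d' := fun d' hd' =>
                (dart_cases d').resolve_left (hA₁ d' hd')
              have hb₂w : inCopy G v w r w b₂ :=
                end_prop (fun z => inCopy G v w r w z) A₁ hA₁nnil
                  (fun d' hd' => (hA₁w d' hd').2.1)
              have hb₂v : inCopy G v w r v b₂ := h₃OK.1
              obtain ⟨T, hT⟩ := shared_walk hreach hdist ⟨ha₁v, ha₁w⟩ ⟨hb₂v, hb₂w⟩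
              set Z₁ : (expl G v w r).Walk a₁ a₁ := A₁.append T.reverse with hZ₁
              set Z₂ : (expl G v w r).Walk u₀ u₀ :=
                M₁.append (T.append (Walk.cons h₃ M₂)) with hZ₂
              have hZ₁OK : ∀ d' ∈ Z₁.darts, sideOK (G := G) (r := r) w d' := by
                intro d' hd'
                rw [hZ₁, Walk.darts_append, List.mem_append] at hd'
                rcases hd' with hd' | hd'
                · exact hA₁w d' hd'
                · exact (reverse_darts_prop (fun _ h₀ => DOK_symm h₀) hT d' hd').2
              have hg1 : GeneratedBy (cycSet G v w r) (chain Z₁) :=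
                gen_closed _ (fun c' hc1 hc2 => hC_side (Or.inr rfl) c' hc1 hc2)
                  Z₁.length Z₁ le_rfl hZ₁OK
              have hZ₂c : pwCount (G := G) (v := v) (w := w) (r := r) Z₂.darts =
                  pwCount (G := G) (v := v) (w := w) (r := r) M₂.darts := by
                rw [hZ₂, Walk.darts_append, pwCount_append, pwCount_eq_zero hM₁,
                  Walk.darts_append, pwCount_append,
                  pwCount_eq_zero (fun d' hd' => (hT d' hd').1), Walk.darts_cons,
                  pwCount_cons_neg h₃OK]
                omega
              have hcc : pwCount (G := G) (v := v) (w := w) (r := r) (Walk.cons h d).darts =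
                  A₁.darts.length + pwCount (G := G) (v := v) (w := w) (r := r)
                    M₂.darts := by
                rw [hceq, Walk.darts_append, pwCount_append, pwCount_eq_zero hM₁, heq₂,
                  Walk.darts_append, pwCount_append, pwCount_all hA₁, Walk.darts_cons,
                  pwCount_cons_neg h₃OK]
                omega
              have hA₁len : 1 ≤ A₁.darts.length := by
                rw [A₁.length_darts]
                by_contra hcon
                exact hA₁nnil (Walk.nil_iff_length_eq.mpr (by omega))
              have hg2 : GeneratedBy (cycSet G v w r) (chain Z₂) :=
                ihk (pwTake (G := G) (v := v) (w := w) (r := r) Z₂.darts + 1) Z₂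
                  (by omega) (lt_add_one _)
              have h1 : chain (Walk.cons h d) = symmDiff (chain M₁)
                  (symmDiff (chain A₁) (chain (Walk.cons h₃ M₂))) := by
                rw [hceq, heq₂, chain_def, Walk.edges_append, chainL_append,
                  Walk.edges_append, chainL_append]; rfl
              have h2 : chain Z₁ = symmDiff (chain A₁) (chain T) := by
                rw [hZ₁, chain_def, Walk.edges_append, chainL_append, ← chain_def,
                  ← chain_def, chain_rev]
              have h3 : chain Z₂ = symmDiff (chain M₁)
                  (symmDiff (chain T) (chain (Walk.cons h₃ M₂))) := by
                rw [hZ₂, chain_def, Walk.edges_append, chainL_append,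
                  Walk.edges_append, chainL_append]; rfl
              have hkey : chain (Walk.cons h d) = symmDiff (chain Z₁) (chain Z₂) := by
                rw [h1, h2, h3, cancel_helper]
              exact gen_congr hkey.symm (gen_symmDiff hg1 hg2)
          · -- rotate branch
            set c' : (expl G v w r).Walk x₂ x₂ := d.append (Walk.cons h Walk.nil) with hc'
            have hperm : (Walk.cons h d).darts.Perm c'.darts := by
              rw [Walk.darts_cons, hc', Walk.darts_append, Walk.darts_cons, Walk.darts_nil]
              exact (List.perm_append_singleton _ _).symm
            have hedgeeq : (Walk.cons h d).edges = (Walk.cons h d).darts.map Dart.edge := rfl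
            have hedgeeq' : c'.edges = c'.darts.map Dart.edge := rfl
            have hedge_perm : (Walk.cons h d).edges.Perm c'.edges := by
              rw [hedgeeq, hedgeeq']
              exact hperm.map _
            obtain ⟨d₁, hd₁, hd₁n⟩ := by push_neg at hallw; exact hallw
            have hd₁v : sideOK (G := G) (r := r) v d₁ := (dart_cases d₁).resolve_right hd₁n
            have hd₁d : d₁ ∈ d.darts := by
              rcases List.mem_cons.mp (by rwa [Walk.darts_cons] at hd₁) with rfl | h'
              · exact absurd hd₁v hfirst
              · exact h'
            have htake' : pwTake (G := G) (v := v) (w := w) (r := r) c'.darts < m := by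
              have h1 : pwTake (G := G) (v := v) (w := w) (r := r) (Walk.cons h d).darts =
                  pwTake (G := G) (v := v) (w := w) (r := r) d.darts + 1 := by
                rw [Walk.darts_cons]
                exact pwTake_cons_pos hfirst _
              have h2 : pwTake (G := G) (v := v) (w := w) (r := r) c'.darts =
                  pwTake (G := G) (v := v) (w := w) (r := r) d.darts := by
                rw [hc', Walk.darts_append]
                exact pwTake_append ⟨d₁, hd₁d, hd₁v⟩
              omega
            have hcount' : pwCount (G := G) (v := v) (w := w) (r := r) c'.darts < k + 1 := by
              rw [← pwCount_perm hperm]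
              exact hcount
            have hgen := ihm c' hcount' htake'
            exact gen_congr (chainL_perm hedge_perm).symm hgen

theorem stmt9' {G : SimpleGraph V} (v w : V) (r : ℕ)
    (hreach : G.Reachable v w) (hdist : 2 * G.dist v w ≤ r)
    {u : EVert V} (o : (expl G v w r).Walk u u) (ho : o.IsCycle) :
    GeneratedBy (cycSet G v w r) (walkEdgeSet o) := by
  have h := main_ind hreach hdist
    (pwCount (G := G) (v := v) (w := w) (r := r) o.darts + 1)
    (pwTake (G := G) (v := v) (w := w) (r := r) o.darts + 1) o (lt_add_one _) (lt_add_one _)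
  have hedges : chain o = walkEdgeSet o :=
    chainL_nodup ho.isCircuit.isTrail.edges_nodup
  exact gen_congr hedges h

end graph

end generic
end aux

/-- Every cycle of the explorer-neighbourhood `Expl(v,w)` is generated over `𝔽₂` by the
cycles of the embedded balls `B_{r/2}(v)'` and `B_{r/2}(w)'`. -/
theorem stmt9 {V : Type u} (G : SimpleGraph V) (v w : V) (r : ℕ)
    (hreach : G.Reachable v w) (hdist : 2 * G.dist v w ≤ r)
    {u : EVert V} (o : (expl G v w r).Walk u u) (ho : o.IsCycle) :
    GeneratedBy
      {S | ∃ (u' : EVert V) (c : (expl G v w r).Walk u' u'), c.IsCycle ∧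
        (BallCopyCycle G v w r v c ∨ BallCopyCycle G v w r w c) ∧ S = walkEdgeSet c}
      (walkEdgeSet o) := by
  show GeneratedBy (cycSet G v w r) (walkEdgeSet o)
  exact stmt9' v w r hreach hdist o ho

end LocalSep
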